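/- Under the subspace correction setting with A symmetric positive semidefinite, V = ∑ⱼ Πⱼ Vⱼ, Aⱼ = Πⱼᵗ A Πⱼ, and restricted local solvers Rⱼ : range(Aⱼ) → range(Aⱼ) symmetric positive definite, the parallel subspace correction preconditioner B_PSC = ∑_{j=1}^J Πⱼ Rⱼ Πⱼᵗ satisfies, for all v ∈ range(A), ⟨B_PSC⁻¹ v, v⟩ = inf over φ ∈ null(A) and decompositions vⱼ ∈ range(Aⱼ) with ∑ⱼ Πⱼ vⱼ = v + φ of ∑_{j=1}^J ⟨Rⱼ⁻¹ vⱼ, vⱼ⟩ (where B_PSC⁻¹ is understood as the inverse of the compression of B_PSC to range(A)). -/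

import Mathlib

open scoped RealInnerProductSpace

theorem stmt_15
    {J : ℕ} {V : Fin J → Type*} [∀ j, NormedAddCommGroup (V j)]
    [∀ j, InnerProductSpace ℝ (V j)] [∀ j, FiniteDimensional ℝ (V j)]
    {𝒱 : Type*} [NormedAddCommGroup 𝒱] [InnerProductSpace ℝ 𝒱] [FiniteDimensional ℝ 𝒱]
    (A : 𝒱 →ₗ[ℝ] 𝒱) (hAsym : A.IsSymmetric) (hApos : ∀ v : 𝒱, 0 ≤ ⟪A v, v⟫)
    (P : ∀ j : Fin J, V j →ₗ[ℝ] 𝒱)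
    (hdecomp : ∀ v : 𝒱, ∃ w : ∀ j, V j, ∑ j : Fin J, P j (w j) = v)
    (Kj : ∀ j : Fin J, Submodule ℝ (V j))
    (hKj : ∀ j, Kj j = LinearMap.range (LinearMap.adjoint (P j) ∘ₗ A ∘ₗ P j))
    (R : ∀ j : Fin J, Kj j →ₗ[ℝ] Kj j)
    (hRsym : ∀ j, (R j).IsSymmetric) (hRpos : ∀ j, ∀ x : Kj j, x ≠ 0 → 0 < ⟪R j x, x⟫)
    (Rinv : ∀ j : Fin J, Kj j →ₗ[ℝ] Kj j)
    (hR1 : ∀ j, R j ∘ₗ Rinv j = LinearMap.id) (hR2 : ∀ j, Rinv j ∘ₗ R j = LinearMap.id)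
    (Bpsc : 𝒱 →ₗ[ℝ] 𝒱)
    (hBpsc : Bpsc = ∑ j : Fin J,
      P j ∘ₗ (Kj j).subtype ∘ₗ R j ∘ₗ (Submodule.orthogonalProjection (Kj j)).toLinearMap ∘ₗ
        LinearMap.adjoint (P j))
    (K : Submodule ℝ 𝒱) (hK : K = LinearMap.range A)
    (C : K →ₗ[ℝ] K)
    (hC1 : ((Submodule.orthogonalProjection K).toLinearMap ∘ₗ Bpsc ∘ₗ K.subtype) ∘ₗ C = LinearMap.id)
    (hC2 : C ∘ₗ ((Submodule.orthogonalProjection K).toLinearMap ∘ₗ Bpsc ∘ₗ K.subtype) = LinearMap.id) :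
    ∀ v : K, ⟪C v, v⟫ =
      sInf {x : ℝ | ∃ φ ∈ LinearMap.ker A, ∃ w : ∀ j, Kj j,
        (∑ j : Fin J, P j ((w j : V j))) = (v : 𝒱) + φ ∧
        x = ∑ j : Fin J, ⟪Rinv j (w j), w j⟫} := by
  intro v
  -- orthogonal complement of K is the kernel of A
  have hperp : Kᗮ = LinearMap.ker A := by
    ext x
    simp only [hK, Submodule.mem_orthogonal, LinearMap.mem_ker]
    constructor
    · intro h
      have h2 : ∀ y : 𝒱, ⟪y, A x⟫ = 0 := fun y => by
        rw [← hAsym y x]; exact h _ ⟨y, rfl⟩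
      exact inner_self_eq_zero.mp (h2 (A x))
    · rintro h u ⟨y, rfl⟩
      rw [hAsym y x, h, inner_zero_right]
  set cw : 𝒱 := ((C v : K) : 𝒱) with hcw
  -- components
  set u : ∀ j, Kj j := fun j => Submodule.orthogonalProjection (Kj j) (LinearMap.adjoint (P j) cw) with hu
  set wstar : ∀ j, Kj j := fun j => R j (u j) with hwstar
  have hB : ∀ x : 𝒱, Bpsc x =
      ∑ j, P j ((R j (Submodule.orthogonalProjection (Kj j) (LinearMap.adjoint (P j) x)) : V j)) := by
    intro x; rw [hBpsc]; simp [LinearMap.sum_apply]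
  have hC1' : (Submodule.orthogonalProjection K (Bpsc cw) : K) = v := by
    have := LinearMap.ext_iff.mp hC1 v
    simpa [LinearMap.comp_apply] using this
  have hmem : Bpsc cw - (v : 𝒱) ∈ Kᗮ := by
    have h := Submodule.sub_starProjection_mem_orthogonal (K := K) (Bpsc cw)
    rwa [Submodule.starProjection_apply, hC1'] at h
  have hzero : ∀ x ∈ Kᗮ, ⟪cw, x⟫ = 0 := fun x hx =>
    Submodule.inner_right_of_mem_orthogonal (C v).2 hx
  -- key adjoint identity
  have key : ∀ j (z : Kj j), ⟪u j, z⟫ = ⟪cw, P j (z : V j)⟫ := by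
    intro j z
    rw [hu]
    rw [Submodule.inner_orthogonalProjectionOnto_eq_of_mem_right, LinearMap.adjoint_inner_left]
  -- symmetry and positivity of Rinv
  have hRR : ∀ j (y : Kj j), R j (Rinv j y) = y := fun j y => LinearMap.ext_iff.mp (hR1 j) y
  have hRR2 : ∀ j (y : Kj j), Rinv j (R j y) = y := fun j y => LinearMap.ext_iff.mp (hR2 j) y
  have hRinvsym : ∀ j, (Rinv j).IsSymmetric := by
    intro j x y
    calc ⟪Rinv j x, y⟫ = ⟪Rinv j x, R j (Rinv j y)⟫ := by rw [hRR]
    _ = ⟪R j (Rinv j x), Rinv j y⟫ := (hRsym j _ _).symm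
    _ = ⟪x, Rinv j y⟫ := by rw [hRR]
  have hRinvpos : ∀ j (z : Kj j), 0 ≤ ⟪Rinv j z, z⟫ := by
    intro j z
    by_cases h : Rinv j z = 0
    · simp [h]
    · refine le_of_lt ?_
      calc (0:ℝ) < ⟪R j (Rinv j z), Rinv j z⟫ := hRpos j _ h
        _ = ⟪Rinv j z, R j (Rinv j z)⟫ := real_inner_comm _ _
        _ = ⟪Rinv j z, z⟫ := by rw [hRR]
  -- value at the minimizer
  have hval : ∑ j, ⟪Rinv j (wstar j), wstar j⟫ = ⟪C v, v⟫ := by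
    have h1 : ∀ j, ⟪Rinv j (wstar j), wstar j⟫ = ⟪cw, P j ((wstar j : V j))⟫ := by
      intro j
      rw [hwstar]
      simp only []
      rw [hRR2, key]
    rw [Finset.sum_congr rfl fun j _ => h1 j, ← inner_sum]
    have h2 : ∑ j, P j ((wstar j : V j)) = Bpsc cw := (hB cw).symm
    rw [h2]
    have h3 : ⟪cw, Bpsc cw⟫ = ⟪cw, (v:𝒱)⟫ + ⟪cw, Bpsc cw - (v:𝒱)⟫ := by
      rw [← inner_add_right]; rw [add_sub_cancel]
    rw [h3, hzero _ hmem, add_zero]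
    rfl
  -- lower bound
  have hlb : ∀ x ∈ {x : ℝ | ∃ φ ∈ LinearMap.ker A, ∃ w : ∀ j, Kj j,
        (∑ j : Fin J, P j ((w j : V j))) = (v : 𝒱) + φ ∧
        x = ∑ j : Fin J, ⟪Rinv j (w j), w j⟫}, ⟪C v, v⟫ ≤ x := by
    rintro x ⟨φ, hφ, w, hw, rfl⟩
    have hcross : ∑ j, ⟪Rinv j (wstar j), w j - wstar j⟫ = 0 := by
      have h1 : ∀ j, ⟪Rinv j (wstar j), w j - wstar j⟫ = ⟪cw, P j ((w j : V j) - (wstar j : V j))⟫ := by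
        intro j
        rw [hwstar]
        simp only []
        rw [hRR2, key]
        norm_num
      rw [Finset.sum_congr rfl fun j _ => h1 j, ← inner_sum]
      have h2 : ∑ j, P j ((w j : V j) - (wstar j : V j)) = ((v:𝒱) + φ) - Bpsc cw := by
        simp only [map_sub, Finset.sum_sub_distrib, hw]
        rw [← hB cw]
      rw [h2]
      have : ((v:𝒱) + φ) - Bpsc cw = φ - (Bpsc cw - (v:𝒱)) := by abel
      rw [this, inner_sub_right, hzero _ hmem, hzero _ (hperp ▸ hφ)]
      ring
    have expand : ∀ j, ⟪Rinv j (w j), w j⟫ =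
        ⟪Rinv j (wstar j), wstar j⟫ + 2 * ⟪Rinv j (wstar j), w j - wstar j⟫ +
          ⟪Rinv j (w j - wstar j), w j - wstar j⟫ := by
      intro j
      have hsplit : w j = wstar j + (w j - wstar j) := by abel
      have hsymm : ⟪Rinv j (w j - wstar j), wstar j⟫ = ⟪Rinv j (wstar j), w j - wstar j⟫ := by
        rw [hRinvsym j, real_inner_comm]
      calc ⟪Rinv j (w j), w j⟫
          = ⟪Rinv j (wstar j + (w j - wstar j)), wstar j + (w j - wstar j)⟫ := by rw [← hsplit]
        _ = _ := by
            rw [map_add, inner_add_left, inner_add_right, inner_add_right, hsymm]; ring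
    calc ⟪C v, v⟫ = ∑ j, ⟪Rinv j (wstar j), wstar j⟫ := hval.symm
      _ ≤ ∑ j, ⟪Rinv j (wstar j), wstar j⟫ +
            (2 * ∑ j, ⟪Rinv j (wstar j), w j - wstar j⟫ +
             ∑ j, ⟪Rinv j (w j - wstar j), w j - wstar j⟫) := by
          rw [hcross]
          have : (0:ℝ) ≤ ∑ j, ⟪Rinv j (w j - wstar j), w j - wstar j⟫ :=
            Finset.sum_nonneg fun j _ => hRinvpos j _
          linarith
      _ = ∑ j, ⟪Rinv j (w j), w j⟫ := by
          rw [Finset.sum_congr rfl fun j _ => expand j]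
          rw [Finset.sum_add_distrib, Finset.sum_add_distrib, Finset.mul_sum]
          ring
  -- membership
  have hmem' : ⟪C v, v⟫ ∈ {x : ℝ | ∃ φ ∈ LinearMap.ker A, ∃ w : ∀ j, Kj j,
        (∑ j : Fin J, P j ((w j : V j))) = (v : 𝒱) + φ ∧
        x = ∑ j : Fin J, ⟪Rinv j (w j), w j⟫} := by
    refine ⟨Bpsc cw - (v:𝒱), hperp ▸ hmem, wstar, ?_, hval.symm⟩
    rw [← hB cw]
    abel
  exact (IsLeast.csInf_eq ⟨hmem', hlb⟩).symm
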